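/- Let π : G → H be a surjective continuous σ-equivariant homomorphism of σ-pro-p-groups. Then the pushforward π_* μ_G equals μ_H, and the induced map π⁻ : G⁻ → H⁻ satisfies (π⁻)_* μ_{G⁻} = μ_{H⁻}. -/

import Mathlib

open MeasureTheory

/-- Let `π : G → H` be a surjective continuous
`σ`-equivariant homomorphism of `σ`-pro-`p`-groups, with Haar probability
measures `μG`, `μH` and multiplication homeomorphisms `eG : G⁺ × G⁻ ≃ₜ G`,
`eH : H⁺ × H⁻ ≃ₜ H`, so that `μ_{G⁻}` (resp. `μ_{H⁻}`) is the pushforward of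
`μG` (resp. `μH`) under the second component of the inverse homeomorphism.
Then `π_* μG = μH` and the induced map `π⁻ : G⁻ → H⁻` satisfies
`(π⁻)_* μ_{G⁻} = μ_{H⁻}`. -/
theorem sigma_pro_p_group_haar_pushforward
    {p : ℕ} (hp : p.Prime) (hodd : Odd p)
    {G : Type*} [Group G] [TopologicalSpace G] [IsTopologicalGroup G]
    [CompactSpace G] [T2Space G] [TotallyDisconnectedSpace G]
    [MeasurableSpace G] [BorelSpace G]
    {H : Type*} [Group H] [TopologicalSpace H] [IsTopologicalGroup H]
    [CompactSpace H] [T2Space H] [TotallyDisconnectedSpace H]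
    [MeasurableSpace H] [BorelSpace H]
    (hGpro : ∀ U : Subgroup G, U.Normal → IsOpen (U : Set G) → ∃ n : ℕ, U.index = p ^ n)
    (hHpro : ∀ U : Subgroup H, U.Normal → IsOpen (U : Set H) → ∃ n : ℕ, U.index = p ^ n)
    (σG : G ≃* G) (hσGcont : Continuous σG) (hσG : ∀ a, σG (σG a) = a)
    (σH : H ≃* H) (hσHcont : Continuous σH) (hσH : ∀ a, σH (σH a) = a)
    (π : G →* H) (hπcont : Continuous π) (hπsurj : Function.Surjective π)
    (hπσ : ∀ g : G, σH (π g) = π (σG g))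
    (μG : Measure G) [μG.IsHaarMeasure] [IsProbabilityMeasure μG] [μG.Regular]
    (μH : Measure H) [μH.IsHaarMeasure] [IsProbabilityMeasure μH] [μH.Regular]
    (eG : ({a : G // σG a = a} × {a : G // σG a = a⁻¹}) ≃ₜ G)
    (heG : ∀ x, eG x = (x.1 : G) * (x.2 : G))
    (eH : ({a : H // σH a = a} × {a : H // σH a = a⁻¹}) ≃ₜ H)
    (heH : ∀ x, eH x = (x.1 : H) * (x.2 : H)) :
    Measure.map π μG = μH ∧
    Measure.map
      (fun a : {a : G // σG a = a⁻¹} =>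
        (⟨π a.1, by rw [hπσ, a.2, map_inv]⟩ : {b : H // σH b = b⁻¹}))
      (Measure.map (fun g : G => (eG.symm g).2) μG) =
      Measure.map (fun h : H => (eH.symm h).2) μH := by
  have hmap : Measure.map π μG = μH := by
    have : (Measure.map π μG).IsHaarMeasure :=
      Measure.isHaarMeasure_map_of_isFiniteMeasure μG π hπcont hπsurj
    have : IsProbabilityMeasure (Measure.map π μG) :=
      Measure.isProbabilityMeasure_map hπcont.measurable.aemeasurable
    exact Measure.isHaarMeasure_eq_of_isProbabilityMeasure _ _
  refine ⟨hmap, ?_⟩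
  -- the commuting square
  set πm : {a : G // σG a = a⁻¹} → {b : H // σH b = b⁻¹} :=
    fun a => (⟨π a.1, by rw [hπσ, a.2, map_inv]⟩ : {b : H // σH b = b⁻¹}) with hπm
  have hsquare : ∀ g : G, (eH.symm (π g)).2 = πm (eG.symm g).2 := by
    intro g
    set x := eG.symm g with hx
    have hg : (x.1 : G) * (x.2 : G) = g := by rw [← heG x, hx, eG.apply_symm_apply]
    set y : ({a : H // σH a = a} × {a : H // σH a = a⁻¹}) :=
      (⟨π x.1, by rw [hπσ, x.1.2]⟩, πm x.2) with hy
    have : eH y = π g := by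
      rw [heH]; show π (x.1 : G) * π (x.2 : G) = π g
      rw [← map_mul, hg]
    have : y = eH.symm (π g) := by rw [← this, eH.symm_apply_apply]
    rw [← this]
  have hm2G : Measurable (fun g : G => (eG.symm g).2) :=
    Measurable.subtype_mk
      (continuous_subtype_val.comp ((continuous_snd).comp eG.symm.continuous)).measurable
  have hm2H : Measurable (fun h : H => (eH.symm h).2) :=
    Measurable.subtype_mk
      (continuous_subtype_val.comp ((continuous_snd).comp eH.symm.continuous)).measurable
  have hπmmeas : Measurable πm :=
    Measurable.subtype_mk ((hπcont.measurable).comp measurable_subtype_coe)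
  rw [Measure.map_map hπmmeas hm2G]
  have : πm ∘ (fun g : G => (eG.symm g).2) = (fun h : H => (eH.symm h).2) ∘ π := by
    funext g; exact (hsquare g).symm
  rw [this, ← Measure.map_map hm2H hπcont.measurable, hmap]
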